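/- Let B be a crossed product of a finite-dimensional F-algebra A with a finite group G whose order is invertible in F. Then the Jacobson radical of B satisfies J(B) = J(A)·B = B·J(A). -/

import Mathlib

set_option maxHeartbeats 1600000


/-- In any ring, `1 - x` is a unit when `x` is in the Jacobson radical. -/
lemma CPJ.isUnit_one_sub {R : Type*} [Ring R] {x : R}
    (hx : x ∈ Ideal.jacobson (⊥ : Ideal R)) : IsUnit (1 - x) := by
  have key : ∀ y ∈ Ideal.jacobson (⊥ : Ideal R), ∃ z : R, z * (1 - y) = 1 := by
    intro y hy
    obtain ⟨z, hz⟩ := Ideal.mem_jacobson_iff.mp hy (-1)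
    refine ⟨z, ?_⟩
    rw [Ideal.mem_bot] at hz
    have h1 : z * (1 - y) - 1 = z * -1 * y + z - 1 := by noncomm_ring
    have h2 : z * (1 - y) - 1 = 0 := by rw [h1, hz]
    exact sub_eq_zero.mp h2
  obtain ⟨z, hz⟩ := key x hx
  have hzx : -(z * x) ∈ Ideal.jacobson (⊥ : Ideal R) :=
    neg_mem (Ideal.mul_mem_left _ z hx)
  have hz1 : z = 1 - -(z * x) := by
    have h : z - z * x = 1 := by rw [← hz]; noncomm_ring
    rw [sub_neg_eq_add]
    calc z = (z - z * x) + z * x := by abel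
    _ = 1 + z * x := by rw [h]
  obtain ⟨v, hv⟩ := key _ hzx
  rw [← hz1] at hv
  have hveq : v = 1 - x := by
    calc v = v * (z * (1 - x)) := by rw [hz, mul_one]
    _ = (v * z) * (1 - x) := by rw [mul_assoc]
    _ = 1 - x := by rw [hv, one_mul]
  exact ⟨⟨1 - x, z, by rw [← hveq]; exact hv, hz⟩, rfl⟩

namespace CPJ


/-- `jspan A N = J(A)·N`. -/
def jspan (A : Type*) [Ring A] {M : Type*} [AddCommGroup M] [Module A M]
    (N : Submodule A M) : Submodule A M :=
  Submodule.span A {z | ∃ j ∈ Ideal.jacobson (⊥ : Ideal A), ∃ x ∈ N, z = j • x}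

lemma jspan_le {A : Type*} [Ring A] {M : Type*} [AddCommGroup M] [Module A M]
    (N : Submodule A M) : jspan A N ≤ N := by
  rw [jspan, Submodule.span_le]
  rintro z ⟨j, _, x, hx, rfl⟩
  exact N.smul_mem j hx

/-- Noncommutative Nakayama. -/
lemma nakayama {A : Type*} [Ring A] {M : Type*} [AddCommGroup M] [Module A M]
    (s : Finset M) (N : Submodule A M) (hsN : Submodule.span A ↑s = N)
    (h : N ≤ jspan A N) : N = ⊥ := by
  classical
  induction s using Finset.strongInduction generalizing N with
  | _ s ih =>
  rcases eq_or_ne s ∅ with rfl | hne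
  · simpa using hsN.symm
  obtain ⟨m₀, hm₀⟩ := Finset.nonempty_of_ne_empty hne
  -- every element of jspan N is a combination with Jacobson coefficients over s
  have hW : ∀ m ∈ jspan A N, ∃ f : M → A,
      (∀ t, f t ∈ Ideal.jacobson (⊥ : Ideal A)) ∧ m = ∑ t ∈ s, f t • t := by
    intro m hm
    induction hm using Submodule.span_induction with
    | mem z hz =>
      obtain ⟨j, hj, x, hx, rfl⟩ := hz
      rw [← hsN] at hx
      obtain ⟨g, -, hg⟩ := Submodule.mem_span_finset.mp hx
      refine ⟨fun t => j * g t, fun t => Ideal.mul_mem_right (g t) _ hj, ?_⟩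
      rw [← hg, Finset.smul_sum]
      exact Finset.sum_congr rfl fun t _ => by simpa using smul_smul j (g t) t
    | zero => exact ⟨0, fun t => by simp, by simp⟩
    | add y z _ _ hy hz =>
      obtain ⟨f₁, hf₁, rfl⟩ := hy
      obtain ⟨f₂, hf₂, rfl⟩ := hz
      exact ⟨f₁ + f₂, fun t => add_mem (hf₁ t) (hf₂ t), by
        rw [← Finset.sum_add_distrib]
        exact Finset.sum_congr rfl fun t _ => (add_smul _ _ _).symm⟩
    | smul a y _ hy =>
      obtain ⟨f, hf, rfl⟩ := hy
      refine ⟨fun t => a * f t, fun t => Ideal.mul_mem_left _ a (hf t), ?_⟩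
      rw [Finset.smul_sum]
      exact Finset.sum_congr rfl fun t _ => by simpa using smul_smul a (f t) t
  -- express m₀
  have hm₀N : m₀ ∈ N := by rw [← hsN]; exact Submodule.subset_span hm₀
  obtain ⟨f, hf, hfeq⟩ := hW m₀ (h hm₀N)
  have hsub : (1 - f m₀) • m₀ ∈ Submodule.span A ↑(s.erase m₀) := by
    have heq : (1 - f m₀) • m₀ = ∑ t ∈ s.erase m₀, f t • t := by
      rw [sub_smul, one_smul]
      rw [← Finset.add_sum_erase s (fun t => f t • t) hm₀] at hfeq
      first
      | exact sub_eq_iff_eq_add'.mpr hfeq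
      | exact sub_eq_iff_eq_add'.mpr hfeq.symm
    rw [heq]
    exact Submodule.sum_mem _ fun t ht => Submodule.smul_mem _ _ (Submodule.subset_span ht)
  obtain ⟨u, hu⟩ := CPJ.isUnit_one_sub (hf m₀)
  have hm₀span : m₀ ∈ Submodule.span A ↑(s.erase m₀) := by
    have h2 := Submodule.smul_mem _ (↑u⁻¹ : A) hsub
    rwa [smul_smul, ← hu, Units.inv_mul, one_smul] at h2
  have hspan' : Submodule.span A ↑(s.erase m₀) = N := by
    refine le_antisymm ?_ ?_
    · rw [Submodule.span_le, ← hsN]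
      exact (Finset.coe_subset.mpr (Finset.erase_subset _ _)).trans Submodule.subset_span
    · rw [← hsN, Submodule.span_le]
      intro t ht
      rcases eq_or_ne t m₀ with rfl | hne'
      · exact hm₀span
      · exact Submodule.subset_span (Finset.mem_coe.mpr (Finset.mem_erase.mpr ⟨hne', ht⟩))
  exact ih (s.erase m₀) (Finset.erase_ssubset hm₀) N hspan' h



/-- Any submodule of a finite-dimensional algebra over a field is finitely generated
as a module over the algebra. -/
lemma fg_of_findim {F A : Type*} [Field F] [Ring A] [Algebra F A] [FiniteDimensional F A]
    (N : Submodule A A) : ∃ s : Finset A, Submodule.span A ↑s = N := by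
  have h1 : (N.restrictScalars F).FG := IsNoetherian.noetherian _
  obtain ⟨s, hs⟩ := h1
  refine ⟨s, le_antisymm ?_ ?_⟩
  · rw [Submodule.span_le]
    intro x hx
    have : x ∈ Submodule.span F ↑s := Submodule.subset_span hx
    rw [hs] at this
    exact this
  · intro x hx
    have : x ∈ Submodule.span F ↑s := by rw [hs]; exact hx
    have h3 := Submodule.span_le_restrictScalars F A (↑s : Set A) this
    rwa [Submodule.restrictScalars_mem] at h3

/-- The chain `J(A)^n` reaches `⊥` in a finite-dimensional algebra. -/
lemma exists_jspan_iterate_bot (F : Type*) {A : Type*} [Field F] [Ring A] [Algebra F A]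
    [FiniteDimensional F A] : ∃ n : ℕ, (jspan A)^[n] (⊤ : Submodule A A) = ⊥ := by
  set N : ℕ → Submodule A A := fun k => (jspan A)^[k] ⊤ with hN
  have hdec : ∀ k, N (k + 1) ≤ N k := by
    intro k
    have : N (k + 1) = jspan A (N k) := by
      simp only [hN, Function.iterate_succ_apply']
    rw [this]
    exact jspan_le _
  obtain ⟨n, hn⟩ := Nat.sInf_mem
    (Set.range_nonempty (fun k => Module.finrank F ((N k).restrictScalars F)))
  have heq : N (n + 1) = N n := by
    have hle : (N (n + 1)).restrictScalars F ≤ (N n).restrictScalars F := hdec n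
    have hfr : Module.finrank F ((N n).restrictScalars F)
        ≤ Module.finrank F ((N (n + 1)).restrictScalars F) := by
      beta_reduce at hn
      rw [hn]
      exact Nat.sInf_le ⟨n + 1, rfl⟩
    have := Submodule.eq_of_le_of_finrank_le hle hfr
    exact Submodule.restrictScalars_injective F _ _ this
  obtain ⟨s, hs⟩ := fg_of_findim (F := F) (N n)
  have hbot : N n = ⊥ := by
    refine nakayama s (N n) hs ?_
    have : jspan A (N n) = N (n + 1) := by
      simp only [hN, Function.iterate_succ_apply']
    rw [this, heq]
  exact ⟨n, hbot⟩

/-- Over a left Artinian ring, `A / J(A)` is a semisimple module. -/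
lemma quotient_jacobson_semisimple (A : Type*) [Ring A] [IsArtinian A A] :
    IsSemisimpleModule A (A ⧸ Ideal.jacobson (⊥ : Ideal A)) := by
  classical
  set J := Ideal.jacobson (⊥ : Ideal A) with hJ
  set Ω : Set (Ideal A) := {I | ∃ s : Finset (Ideal A), (∀ m ∈ s, m.IsMaximal) ∧ I = s.inf id}
    with hΩ
  have hΩne : Ω.Nonempty := ⟨⊤, ∅, by simp, by simp⟩
  obtain ⟨I₀, ⟨s₀, hs₀max, rfl⟩, hmin⟩ := IsArtinian.set_has_minimal Ω hΩne
  have hle : ∀ m : Ideal A, m.IsMaximal → s₀.inf id ≤ m := by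
    intro m hm
    by_contra hnot
    have h1 : s₀.inf id ⊓ m < s₀.inf id := inf_lt_left.mpr hnot
    have h2 : s₀.inf id ⊓ m ∈ Ω := by
      refine ⟨insert m s₀, fun m' hm' => ?_, ?_⟩
      · rcases Finset.mem_insert.mp hm' with rfl | h; exacts [hm, hs₀max _ h]
      · rw [Finset.inf_insert, inf_comm]; rfl
    exact hmin _ h2 h1
  have hJeq : J = s₀.inf id := by
    refine le_antisymm ?_ ?_
    · exact Finset.le_inf fun m hm => sInf_le ⟨bot_le, hs₀max m hm⟩
    · exact le_sInf fun I hI => hle I hI.2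
  -- embed A/J into the product of the A/m
  haveI : ∀ m : {x // x ∈ s₀}, IsSimpleModule A (A ⧸ (m : Ideal A)) := fun m =>
    isSimpleModule_iff_isCoatom.mpr (Ideal.isMaximal_def.mp (hs₀max m m.2))
  set f : A →ₗ[A] ((m : {x // x ∈ s₀}) → A ⧸ (m : Ideal A)) :=
    LinearMap.pi (fun m => (m : Ideal A).mkQ) with hf
  have hker : LinearMap.ker f = J := by
    rw [hf, LinearMap.ker_pi, hJeq]
    rw [Finset.inf_eq_iInf]
    simp only [Submodule.ker_mkQ]
    rw [iInf_subtype]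
    rfl
  set g := J.liftQ f (le_of_eq hker.symm) with hg
  have hginj : Function.Injective g := by
    rw [← LinearMap.ker_eq_bot, hg]
    exact Submodule.ker_liftQ_eq_bot _ _ _ (le_of_eq hker)
  haveI hpi : IsSemisimpleModule A ((m : {x // x ∈ s₀}) → A ⧸ (m : Ideal A)) := by
    refine isSemisimpleModule_of_isSemisimpleModule_submodule'
      (p := fun m => LinearMap.range (LinearMap.single A _ m)) (fun m => ?_) ?_
    · exact IsSemisimpleModule.range _
    · rw [eq_top_iff]
      intro v _
      have : v = ∑ m : {x // x ∈ s₀}, Pi.single m (v m) := (Finset.univ_sum_single v).symm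
      rw [this]
      exact Submodule.sum_mem _ fun m _ => Submodule.mem_iSup_of_mem m ⟨v m, rfl⟩
  exact IsSemisimpleModule.congr (M := ↥(LinearMap.range g)) (LinearEquiv.ofInjective g hginj)


end CPJ

/-- For a crossed product `B = ⊕_{x ∈ G} 𝒜 x` of a finite-dimensional `F`-algebra
`A = 𝒜 1` with a finite group `G` whose order is invertible in `F`, the Jacobson radical
satisfies `J(B) = B·J(A) = J(A)·B`. -/
theorem crossedProduct_jacobson
    {F : Type*} [Field F] {G : Type*} [Group G] [Finite G] [DecidableEq G]
    {B : Type*} [Ring B] [Algebra F B]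
    (𝒜 : G → Submodule F B)
    (hone : (1 : B) ∈ 𝒜 1)
    (hmul : ∀ x y : G, ∀ a ∈ 𝒜 x, ∀ b ∈ 𝒜 y, a * b ∈ 𝒜 (x * y))
    (hinternal : DirectSum.IsInternal 𝒜)
    (hcross : ∀ x : G, ∃ u ∈ 𝒜 x, IsUnit u)
    (hinv : (Nat.card G : F) ≠ 0)
    (A : Type*) [Ring A] [Algebra F A] [FiniteDimensional F A]
    (ι : A →ₐ[F] B) (hι : Function.Injective ι)
    (hrange : Subalgebra.toSubmodule ι.range = 𝒜 1) :
    ((Ideal.jacobson (⊥ : Ideal B)) : Set B) =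
      (Submodule.span B (ι '' ((Ideal.jacobson (⊥ : Ideal A)) : Set A)) : Set B) ∧
    ((Ideal.jacobson (⊥ : Ideal B)) : Set B) =
      (AddSubgroup.closure {z : B | ∃ j ∈ ι '' ((Ideal.jacobson (⊥ : Ideal A)) : Set A),
        ∃ b : B, z = j * b} : Set B) := by
  classical
  letI : Fintype G := Fintype.ofFinite G
  -- Basic facts about the identity component
  have hι1 : ∀ a : A, ι a ∈ 𝒜 1 := fun a => by
    rw [← hrange]; exact ⟨a, rfl⟩
  have hmem1 : ∀ {v : B}, v ∈ 𝒜 1 → ∃ a : A, ι a = v := by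
    intro v hv; rw [← hrange] at hv; exact hv
  -- two-sidedness of J(A)
  have hJAr : ∀ {j : A} (a : A), j ∈ Ideal.jacobson (⊥ : Ideal A) →
      j * a ∈ Ideal.jacobson (⊥ : Ideal A) := fun {j} a hj =>
    Ideal.mul_mem_right a _ hj
  -- existence of decompositions
  have D1 : ∀ b : B, ∃ d : G → B, (∀ x, d x ∈ 𝒜 x) ∧ ∑ x, d x = b := by
    intro b
    have hb : b ∈ iSup 𝒜 := by
      rw [hinternal.submodule_iSup_eq_top]; trivial
    obtain ⟨f, hf, hsum⟩ := (Submodule.mem_iSup_iff_exists_finsupp 𝒜 b).mp hb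
    refine ⟨f, hf, ?_⟩
    rw [← hsum]
    exact (Finsupp.sum_fintype f (fun _ m => m) (fun _ => rfl)).symm
  -- uniqueness of decompositions
  have D2 : ∀ d : G → B, (∀ x, d x ∈ 𝒜 x) → ∑ x, d x = 0 → ∀ x, d x = 0 := by
    intro d hd hsum y
    set ξ : DirectSum G fun x => ↥(𝒜 x) :=
      ∑ x, DirectSum.of (fun x => ↥(𝒜 x)) x ⟨d x, hd x⟩ with hξ
    have hcoe : DirectSum.coeAddMonoidHom 𝒜 ξ = 0 := by
      rw [hξ, map_sum]
      simpa only [DirectSum.coeAddMonoidHom_of] using hsum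
    have hξ0 : ξ = 0 := hinternal.injective (by rw [hcoe]; exact (map_zero _).symm)
    have happ := congrArg (fun w => w y) hξ0
    have hsum_app := DFinsupp.finset_sum_apply Finset.univ
      (fun x => DirectSum.of (fun x => ↥(𝒜 x)) x ⟨d x, hd x⟩) y
    simp only [hξ] at happ
    rw [hsum_app] at happ
    have hss : ∑ a : G, ((DirectSum.of (fun x => ↥(𝒜 x)) a) ⟨d a, hd a⟩) y
        = ((DirectSum.of (fun x => ↥(𝒜 x)) y) ⟨d y, hd y⟩) y :=
      Finset.sum_eq_single_of_mem y (Finset.mem_univ y)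
        (fun x _ hxy => DirectSum.of_eq_of_ne x y _ (Ne.symm hxy))
    rw [hss, DirectSum.of_eq_same] at happ
    exact congrArg Subtype.val happ
  -- homogeneous units with homogeneous inverses
  have hcu : ∀ x : G, ∃ u : Bˣ, (u : B) ∈ 𝒜 x ∧ ((u⁻¹ : Bˣ) : B) ∈ 𝒜 x⁻¹ := by
    intro x
    obtain ⟨u, hu, hunit⟩ := hcross x
    obtain ⟨d, hd, hsum⟩ := D1 ((hunit.unit⁻¹ : Bˣ) : B)
    set g : G → B := fun y =>
      u * d (x⁻¹ * y) - (if y = 1 then (1 : B) else 0) with hg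
    have hgmem : ∀ y, g y ∈ 𝒜 y := by
      intro y
      refine sub_mem ?_ ?_
      · have := hmul x (x⁻¹ * y) u hu _ (hd (x⁻¹ * y))
        rwa [mul_inv_cancel_left] at this
      · split
        · next h => subst h; exact hone
        · exact zero_mem _
    have hgsum : ∑ y, g y = 0 := by
      rw [hg]
      rw [Finset.sum_sub_distrib]
      have h1 : ∑ y : G, (if y = 1 then (1:B) else 0) = 1 := by simp
      have h2 : (∑ y : G, u * d (x⁻¹ * y)) = 1 := by
        rw [← Finset.mul_sum]
        rw [show (∑ y : G, d (x⁻¹ * y)) = ∑ y : G, d y from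
          Fintype.sum_equiv (Equiv.mulLeft x⁻¹) _ _ (fun y => rfl)]
        rw [hsum]
        exact hunit.unit.mul_inv
      rw [h1, h2, sub_self]
    have hkey : ∀ y, g y = 0 := D2 g hgmem hgsum
    have h1 : u * d x⁻¹ = 1 := by
      have := hkey 1
      rw [hg] at this
      simpa using sub_eq_zero.mp this
    have hinv' : ((hunit.unit⁻¹ : Bˣ) : B) = d x⁻¹ := by
      calc ((hunit.unit⁻¹ : Bˣ) : B)
          = ((hunit.unit⁻¹ : Bˣ) : B) * (u * d x⁻¹) := by rw [h1, mul_one]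
        _ = (((hunit.unit⁻¹ : Bˣ) : B) * u) * d x⁻¹ := by rw [mul_assoc]
        _ = d x⁻¹ := by
            rw [show (((hunit.unit⁻¹ : Bˣ) : B) * u) = 1 from hunit.unit.inv_mul, one_mul]
    exact ⟨hunit.unit, hu, by rw [hinv']; exact hd x⁻¹⟩
  choose c hc1 hc2 using hcu
  -- conjugation by a homogeneous unit preserves ι '' J(A)
  have hconj : ∀ (u : Bˣ) (x : G), ((u : B) ∈ 𝒜 x) → (((u⁻¹ : Bˣ) : B) ∈ 𝒜 x⁻¹) →
      ∀ j ∈ Ideal.jacobson (⊥ : Ideal A),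
      ∃ j' ∈ Ideal.jacobson (⊥ : Ideal A), ι j' = (u : B) * ι j * ((u⁻¹ : Bˣ) : B) := by
    intro u x hu hu'
    have hmemσ : ∀ a : A, (u : B) * ι a * ((u⁻¹ : Bˣ) : B) ∈ 𝒜 1 := fun a => by
      have := hmul (x * 1) x⁻¹ _ (hmul x 1 _ hu _ (hι1 a)) _ hu'
      rwa [mul_one, mul_inv_cancel] at this
    have hmemτ : ∀ a : A, ((u⁻¹ : Bˣ) : B) * ι a * (u : B) ∈ 𝒜 1 := fun a => by
      have := hmul (x⁻¹ * 1) x _ (hmul x⁻¹ 1 _ hu' _ (hι1 a)) _ hu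
      rwa [mul_one, inv_mul_cancel] at this
    choose σf hσf using fun a => hmem1 (hmemσ a)
    choose τf hτf using fun a => hmem1 (hmemτ a)
    have hτσ : Function.LeftInverse τf σf := by
      intro a
      apply hι
      rw [hτf, hσf]
      calc ((u⁻¹ : Bˣ) : B) * ((u : B) * ι a * ((u⁻¹ : Bˣ) : B)) * (u : B)
          = (((u⁻¹ : Bˣ) : B) * (u : B)) * ι a * (((u⁻¹ : Bˣ) : B) * (u : B)) := by
            noncomm_ring
        _ = ι a := by rw [u.inv_mul]; rw [one_mul, mul_one]
    have hστ : Function.RightInverse τf σf := by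
      intro a
      apply hι
      rw [hσf, hτf]
      calc (u : B) * (((u⁻¹ : Bˣ) : B) * ι a * (u : B)) * ((u⁻¹ : Bˣ) : B)
          = ((u : B) * ((u⁻¹ : Bˣ) : B)) * ι a * ((u : B) * ((u⁻¹ : Bˣ) : B)) := by
            noncomm_ring
        _ = ι a := by rw [u.mul_inv]; rw [one_mul, mul_one]
    have hmulσ : ∀ a b : A, σf (a * b) = σf a * σf b := by
      intro a b
      apply hι
      rw [map_mul, hσf, hσf, hσf, map_mul]
      calc (u : B) * (ι a * ι b) * ((u⁻¹ : Bˣ) : B)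
          = (u : B) * ι a * (1 : B) * ι b * ((u⁻¹ : Bˣ) : B) := by noncomm_ring
        _ = (u : B) * ι a * (((u⁻¹ : Bˣ) : B) * (u : B)) * ι b * ((u⁻¹ : Bˣ) : B) := by
            rw [u.inv_mul]
        _ = ((u : B) * ι a * ((u⁻¹ : Bˣ) : B)) * ((u : B) * ι b * ((u⁻¹ : Bˣ) : B)) := by
            noncomm_ring
    have haddσ : ∀ a b : A, σf (a + b) = σf a + σf b := by
      intro a b
      apply hι
      rw [map_add, hσf, hσf, hσf, map_add]
      noncomm_ring
    set E : A ≃+* A :=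
      { toFun := σf, invFun := τf, left_inv := hτσ, right_inv := hστ,
        map_mul' := hmulσ, map_add' := haddσ } with hE
    have hmap : Ideal.map (E : A →+* A) (Ideal.jacobson (⊥ : Ideal A))
        = Ideal.jacobson (⊥ : Ideal A) := by
      have h := Ideal.map_jacobson_of_bijective (I := (⊥ : Ideal A))
        (f := (E : A →+* A)) E.bijective
      rwa [Ideal.map_bot] at h
    intro j hj
    refine ⟨σf j, ?_, hσf j⟩
    rw [← hmap]
    exact Ideal.mem_map_of_mem _ hj
  have hconjL : ∀ (x : G), ∀ j ∈ Ideal.jacobson (⊥ : Ideal A),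
      ∃ j' ∈ Ideal.jacobson (⊥ : Ideal A), (c x : B) * ι j = ι j' * (c x : B) := by
    intro x j hj
    obtain ⟨j', hj', hj'eq⟩ := hconj (c x) x (hc1 x) (hc2 x) j hj
    refine ⟨j', hj', ?_⟩
    rw [hj'eq, mul_assoc, mul_assoc, (c x).inv_mul, mul_one]
  have hconjR : ∀ (x : G), ∀ j ∈ Ideal.jacobson (⊥ : Ideal A),
      ∃ j' ∈ Ideal.jacobson (⊥ : Ideal A), ι j * (c x : B) = (c x : B) * ι j' := by
    intro x j hj
    obtain ⟨j', hj', hj'eq⟩ := hconj (c x)⁻¹ x⁻¹ (hc2 x) (by rw [inv_inv]; exact hc1 x) j hj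
    refine ⟨j', hj', ?_⟩
    rw [hj'eq]
    rw [show ((((c x)⁻¹)⁻¹ : Bˣ) : B) = (c x : B) by rw [inv_inv]]
    rw [← mul_assoc, ← mul_assoc, (c x).mul_inv, one_mul]
  -- every homogeneous element factors through the unit
  have hxformL : ∀ (x : G) (v : B), v ∈ 𝒜 x → ∃ a : A, v = (c x : B) * ι a := by
    intro x v hv
    have hmem : (((c x)⁻¹ : Bˣ) : B) * v ∈ 𝒜 1 := by
      have := hmul x⁻¹ x _ (hc2 x) _ hv
      rwa [inv_mul_cancel] at this
    obtain ⟨a, ha⟩ := hmem1 hmem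
    exact ⟨a, by rw [ha, ← mul_assoc, (c x).mul_inv, one_mul]⟩
  have hxformR : ∀ (x : G) (v : B), v ∈ 𝒜 x → ∃ a : A, v = ι a * (c x : B) := by
    intro x v hv
    have hmem : v * (((c x)⁻¹ : Bˣ) : B) ∈ 𝒜 1 := by
      have := hmul x x⁻¹ _ hv _ (hc2 x)
      rwa [mul_inv_cancel] at this
    obtain ⟨a, ha⟩ := hmem1 hmem
    exact ⟨a, by rw [ha, mul_assoc, (c x).inv_mul, mul_one]⟩
  -- T = B·ι(J(A))
  set T : Ideal B := Submodule.span B (⇑ι '' (Ideal.jacobson (⊥ : Ideal A) : Set A)) with hT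
  have hTgen : ∀ j ∈ Ideal.jacobson (⊥ : Ideal A), ι j ∈ T := fun j hj =>
    Submodule.subset_span ⟨j, hj, rfl⟩
  -- T is stable under right multiplication
  have hTr : ∀ t ∈ T, ∀ b : B, t * b ∈ T := by
    intro t ht b
    induction ht using Submodule.span_induction with
    | mem z hz =>
      obtain ⟨j, hj, rfl⟩ := hz
      obtain ⟨d, hd, hdsum⟩ := D1 b
      rw [← hdsum, Finset.mul_sum]
      refine Submodule.sum_mem _ fun y _ => ?_
      obtain ⟨a, ha⟩ := hxformL y (d y) (hd y)
      obtain ⟨j2, hj2, hj2eq⟩ := hconjR y j hj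
      have heq : ι j * d y = (c y : B) * ι (j2 * a) := by
        rw [ha, map_mul, ← mul_assoc, hj2eq, mul_assoc]
      rw [heq]
      have hmem := Submodule.smul_mem T ((c y : B)) (hTgen _ (hJAr a hj2))
      rwa [smul_eq_mul] at hmem
    | zero => rw [zero_mul]; exact T.zero_mem
    | add u v _ _ hu hv => rw [add_mul]; exact T.add_mem hu hv
    | smul r u _ hu => rw [smul_eq_mul, mul_assoc]; exact T.smul_mem r hu
  -- the right-ideal additive closure
  set Sg : Set B := {z : B | ∃ j ∈ ⇑ι '' ((Ideal.jacobson (⊥ : Ideal A)) : Set A),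
    ∃ b : B, z = j * b} with hSg
  set S : AddSubgroup B := AddSubgroup.closure Sg with hS
  have hST : ∀ z ∈ S, z ∈ T := by
    intro z hz
    have hle : AddSubgroup.closure Sg ≤ T.toAddSubgroup := by
      rw [AddSubgroup.closure_le]
      rintro w ⟨j', ⟨j, hj, rfl⟩, b, rfl⟩
      exact hTr _ (hTgen j hj) b
    exact hle hz
  have hmulS : ∀ (r : B), ∀ z ∈ S, r * z ∈ S := by
    intro r z hz
    induction hz using AddSubgroup.closure_induction with
    | mem w hw =>
      obtain ⟨j', ⟨j, hj, rfl⟩, b, rfl⟩ := hw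
      obtain ⟨d, hd, hdsum⟩ := D1 r
      rw [← hdsum, Finset.sum_mul]
      refine AddSubgroup.sum_mem _ fun y _ => ?_
      obtain ⟨a, ha⟩ := hxformL y (d y) (hd y)
      obtain ⟨j2, hj2, hj2eq⟩ := hconjL y (a * j) (Ideal.mul_mem_left _ a hj)
      have heq : d y * (ι j * b) = ι j2 * ((c y : B) * b) := by
        rw [ha, mul_assoc, ← mul_assoc (ι a), ← map_mul, ← mul_assoc, ← mul_assoc, hj2eq,
          mul_assoc]
      rw [heq]
      exact AddSubgroup.subset_closure ⟨ι j2, ⟨j2, hj2, rfl⟩, (c y : B) * b, rfl⟩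
    | zero => rw [mul_zero]; exact zero_mem S
    | add u v _ _ hu hv => rw [mul_add]; exact add_mem hu hv
    | neg u _ hu => rw [mul_neg]; exact neg_mem hu
  have hTS : ∀ z ∈ T, z ∈ S := by
    intro z hz
    induction hz using Submodule.span_induction with
    | mem w hw =>
      obtain ⟨j, hj, rfl⟩ := hw
      exact AddSubgroup.subset_closure ⟨ι j, ⟨j, hj, rfl⟩, 1, (mul_one _).symm⟩
    | zero => exact zero_mem S
    | add u v _ _ hu hv => exact add_mem hu hv
    | smul r u _ hu => rw [smul_eq_mul]; exact hmulS r u hu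
  have hTSset : (T : Set B) = (S : Set B) := Set.ext fun z => ⟨hTS z, hST z⟩
  -- Part B : T ≤ J(B)
  have hTJB : T ≤ Ideal.jacobson (⊥ : Ideal B) := by
    obtain ⟨n, hn⟩ := CPJ.exists_jspan_iterate_bot F (A := A)
    set Tk : ℕ → Ideal B := fun k =>
      Submodule.span B (⇑ι '' ((CPJ.jspan A)^[k] (⊤ : Submodule A A) : Set A)) with hTk
    have hstep : ∀ k : ℕ, ∀ v ∈ Tk k, ∀ w ∈ T, w * v ∈ Tk (k+1) := by
      intro k v hv
      induction hv using Submodule.span_induction with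
      | mem z hz =>
        obtain ⟨m, hm, rfl⟩ := hz
        intro w hw
        induction hw using Submodule.span_induction with
        | mem z' hz' =>
          obtain ⟨j, hj, rfl⟩ := hz'
          rw [← map_mul]
          refine Submodule.subset_span ⟨j * m, ?_, rfl⟩
          rw [Function.iterate_succ_apply']
          exact Submodule.subset_span ⟨j, hj, m, hm, rfl⟩
        | zero => rw [zero_mul]; exact (Tk (k+1)).zero_mem
        | add u₁ u₂ _ _ h₁ h₂ => rw [add_mul]; exact add_mem h₁ h₂
        | smul r u _ hu => rw [smul_eq_mul, mul_assoc]; exact (Tk (k+1)).smul_mem r hu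
      | zero => intro w hw; rw [mul_zero]; exact (Tk (k+1)).zero_mem
      | add v₁ v₂ _ _ h₁ h₂ => intro w hw; rw [mul_add]; exact add_mem (h₁ w hw) (h₂ w hw)
      | smul r v' _ hv' =>
        intro w hw
        rw [smul_eq_mul, ← mul_assoc]
        exact hv' (w * r) (hTr w hw r)
    have hpow : ∀ t ∈ T, ∀ k : ℕ, t ^ (k+1) ∈ Tk k := by
      intro t ht k
      induction k with
      | zero =>
        rw [pow_one]
        have hle : T ≤ Tk 0 := by
          rw [hTk]
          refine Submodule.span_mono (Set.image_mono ?_)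
          intro a _
          simp
        exact hle ht
      | succ k ih =>
        rw [pow_succ']
        exact hstep k _ ih t ht
    have hTkn : Tk n = ⊥ := by
      rw [hTk]
      simp only [hn, Submodule.bot_coe]
      simp
    have hnil : ∀ t ∈ T, t ^ (n+1) = 0 := by
      intro t ht
      have := hpow t ht n
      rw [hTkn] at this
      simpa using this
    intro t ht
    show t ∈ sInf {J : Ideal B | ⊥ ≤ J ∧ J.IsMaximal}
    rw [Ideal.mem_sInf]
    rintro 𝔪 ⟨-, h𝔪⟩
    by_contra htm
    have hnle : ¬ T ≤ 𝔪 := fun hle => htm (hle ht)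
    have htop : 𝔪 ⊔ T = ⊤ := (Ideal.isMaximal_def.mp h𝔪).2 _ (left_lt_sup.mpr hnle)
    have h1 : (1 : B) ∈ 𝔪 ⊔ T := by rw [htop]; trivial
    obtain ⟨m', hm', t', ht', hsum1⟩ := Submodule.mem_sup.mp h1
    have hm'eq : m' = 1 - t' := eq_sub_of_add_eq hsum1
    have hunit : IsUnit m' := by
      rw [hm'eq]
      exact IsNilpotent.isUnit_one_sub ⟨n+1, hnil t' ht'⟩
    exact h𝔪.ne_top (Ideal.eq_top_of_isUnit_mem _ hm' hunit)
  -- Part C : J(B) ≤ T, by a Maschke-type averaging argument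
  have hJBT : Ideal.jacobson (⊥ : Ideal B) ≤ T := by
    letI instAM : Module A (B ⧸ T) := Module.compHom _ (ι.toRingHom : A →+* B)
    have hsmul_def : ∀ (a : A) (m : B ⧸ T), a • m = ι a • m := fun a m => rfl
    haveI : IsArtinian A A := isArtinian_of_tower F inferInstance
    haveI hss : IsSemisimpleModule A (A ⧸ Ideal.jacobson (⊥ : Ideal A)) :=
      CPJ.quotient_jacobson_semisimple A
    -- the A-linear maps ψ x : A/J(A) → B/T,  a ↦ ι a · c x
    have hψ : ∀ x : G, ∃ ψ : (A ⧸ Ideal.jacobson (⊥ : Ideal A)) →ₗ[A] (B ⧸ T),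
        ∀ a : A, ψ (Submodule.Quotient.mk a) = Submodule.Quotient.mk (ι a * (c x : B)) := by
      intro x
      set φ : A →ₗ[A] (B ⧸ T) :=
        { toFun := fun a => Submodule.Quotient.mk (ι a * (c x : B))
          map_add' := fun a b => by
            show (Submodule.Quotient.mk (ι (a + b) * (c x : B)) : B ⧸ T)
              = Submodule.Quotient.mk (ι a * (c x : B))
                + Submodule.Quotient.mk (ι b * (c x : B))
            rw [map_add, add_mul]
            exact Submodule.Quotient.mk_add T
          map_smul' := fun r a => by
            show (Submodule.Quotient.mk (ι (r • a) * (c x : B)) : B ⧸ T)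
              = r • Submodule.Quotient.mk (ι a * (c x : B))
            have h : ι (r • a) * (c x : B) = ι r * (ι a * (c x : B)) := by
              rw [smul_eq_mul, map_mul, mul_assoc]
            rw [h, hsmul_def]
            exact Submodule.Quotient.mk_smul T (ι r) (ι a * (c x : B)) } with hφdef
      have hker : Ideal.jacobson (⊥ : Ideal A) ≤ LinearMap.ker φ := by
        intro j hj
        rw [LinearMap.mem_ker, hφdef]
        exact (Submodule.Quotient.mk_eq_zero T).mpr (hTr _ (hTgen j hj) _)
      exact ⟨(Ideal.jacobson (⊥ : Ideal A)).liftQ φ hker,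
        fun a => Submodule.liftQ_apply _ _ _⟩
    choose ψ hψapp using hψ
    have hsup : ⨆ x : G, LinearMap.range (ψ x) = ⊤ := by
      rw [eq_top_iff]
      rintro m -
      obtain ⟨b, rfl⟩ := Submodule.Quotient.mk_surjective T m
      obtain ⟨d, hd, hdsum⟩ := D1 b
      rw [← hdsum]
      have hmk : (Submodule.Quotient.mk (∑ x : G, d x) : B ⧸ T)
          = ∑ x : G, (Submodule.Quotient.mk (d x) : B ⧸ T) := map_sum T.mkQ d Finset.univ
      rw [hmk]
      refine Submodule.sum_mem _ fun x _ => Submodule.mem_iSup_of_mem x ?_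
      obtain ⟨a, ha⟩ := hxformR x (d x) (hd x)
      exact ⟨Submodule.Quotient.mk a, by rw [hψapp, ha]⟩
    haveI hMss : IsSemisimpleModule A (B ⧸ T) :=
      isSemisimpleModule_of_isSemisimpleModule_submodule'
        (p := fun x => LinearMap.range (ψ x)) (fun x => IsSemisimpleModule.range _) hsup
    -- the image of J(B) in B/T
    set LB : Submodule B (B ⧸ T) := Submodule.map T.mkQ (Ideal.jacobson (⊥ : Ideal B))
      with hLB
    set L : Submodule A (B ⧸ T) :=
      { carrier := ↑LB
        add_mem' := fun h1 h2 => LB.add_mem h1 h2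
        zero_mem' := LB.zero_mem
        smul_mem' := fun a m hm => LB.smul_mem (ι a) hm } with hLdef
    obtain ⟨L', hL'⟩ := exists_isCompl L
    set π : (B ⧸ T) →ₗ[A] (B ⧸ T) := L.subtype.comp (L.linearProjOfIsCompl L' hL') with hπdef
    have hπmem : ∀ m, π m ∈ LB := fun m => (L.linearProjOfIsCompl L' hL' m).2
    have hπid : ∀ m ∈ LB, π m = m := by
      intro m hm
      have h0 : π m = ↑(L.linearProjOfIsCompl L' hL' m) := rfl
      have hmL : m ∈ L := hm
      have h1 : L.linearProjOfIsCompl L' hL' m = ⟨m, hmL⟩ :=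
        Submodule.linearProjOfIsCompl_apply_left hL' ⟨m, hmL⟩
      rw [h0, h1]
    -- the averaged projection
    set p : (B ⧸ T) → (B ⧸ T) := fun m =>
      (Nat.card G : F)⁻¹ • ∑ x : G, (c x : B) • π ((((c x)⁻¹ : Bˣ) : B) • m) with hpdef
    have hpadd : ∀ m m' : B ⧸ T, p (m + m') = p m + p m' := by
      intro m m'
      rw [hpdef]
      simp only [smul_add, map_add, Finset.sum_add_distrib]
    have hpmem : ∀ m, p m ∈ LB := by
      intro m
      have hs : ∑ x : G, (c x : B) • π ((((c x)⁻¹ : Bˣ) : B) • m) ∈ LB :=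
        Submodule.sum_mem _ fun x _ => LB.smul_mem _ (hπmem _)
      have h2 := LB.smul_mem (algebraMap F B ((Nat.card G : F)⁻¹)) hs
      rwa [algebraMap_smul] at h2
    have hpid : ∀ m ∈ LB, p m = m := by
      intro m hm
      obtain ⟨k, hk, rfl⟩ := hm
      have hterm : ∀ x : G, (c x : B) • π ((((c x)⁻¹ : Bˣ) : B) • T.mkQ k) = T.mkQ k := by
        intro x
        have h1 : (((c x)⁻¹ : Bˣ) : B) • T.mkQ k
            = T.mkQ ((((c x)⁻¹ : Bˣ) : B) * k) := (map_smul T.mkQ _ k).symm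
        have h2 : T.mkQ ((((c x)⁻¹ : Bˣ) : B) * k) ∈ LB :=
          ⟨_, Ideal.mul_mem_left _ _ hk, rfl⟩
        rw [h1, hπid _ h2, ← map_smul]
        have : (c x : B) • ((((c x)⁻¹ : Bˣ) : B) * k) = k := by
          rw [smul_eq_mul, ← mul_assoc, (c x).mul_inv, one_mul]
        rw [this]
      rw [hpdef]
      simp only [hterm]
      rw [Finset.sum_const, Finset.card_univ]
      rw [← Nat.cast_smul_eq_nsmul F, smul_smul]
      rw [show (Fintype.card G : F) = (Nat.card G : F) by rw [Nat.card_eq_fintype_card]]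
      rw [inv_mul_cancel₀ hinv, one_smul]
    have hpBhom : ∀ (y : G) (b : B), b ∈ 𝒜 y → ∀ m : B ⧸ T, p (b • m) = b • p m := by
      intro y b hb m
      have hterm : ∀ x : G, (c (y*x) : B) • π ((((c (y*x))⁻¹ : Bˣ) : B) • (b • m))
          = b • ((c x : B) • π ((((c x)⁻¹ : Bˣ) : B) • m)) := by
        intro x
        have hmem : (((c (y*x))⁻¹ : Bˣ) : B) * b * (c x : B) ∈ 𝒜 1 := by
          have := hmul ((y*x)⁻¹ * y) x _ (hmul (y*x)⁻¹ y _ (hc2 (y*x)) _ hb) _ (hc1 x)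
          rwa [show ((y*x)⁻¹ * y) * x = 1 by group] at this
        obtain ⟨a, ha⟩ := hmem1 hmem
        have hfact : (((c (y*x))⁻¹ : Bˣ) : B) * b = ι a * (((c x)⁻¹ : Bˣ) : B) := by
          rw [ha, mul_assoc, (c x).mul_inv, mul_one]
        have hback : (c (y*x) : B) * ι a = b * (c x : B) := by
          rw [ha, ← mul_assoc, ← mul_assoc, (c (y*x)).mul_inv, one_mul]
        calc (c (y*x) : B) • π ((((c (y*x))⁻¹ : Bˣ) : B) • (b • m))
            = (c (y*x) : B) • π ((ι a * (((c x)⁻¹ : Bˣ) : B)) • m) := by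
              rw [smul_smul, hfact]
          _ = (c (y*x) : B) • π (ι a • ((((c x)⁻¹ : Bˣ) : B) • m)) := by rw [mul_smul]
          _ = (c (y*x) : B) • (ι a • π ((((c x)⁻¹ : Bˣ) : B) • m)) := by
              rw [← hsmul_def, map_smul, hsmul_def]
          _ = ((c (y*x) : B) * ι a) • π ((((c x)⁻¹ : Bˣ) : B) • m) := by rw [smul_smul]
          _ = (b * (c x : B)) • π ((((c x)⁻¹ : Bˣ) : B) • m) := by rw [hback]
          _ = b • ((c x : B) • π ((((c x)⁻¹ : Bˣ) : B) • m)) := by rw [mul_smul]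
      have hre : ∑ x : G, (c x : B) • π ((((c x)⁻¹ : Bˣ) : B) • (b • m))
          = ∑ x : G, (c (y*x) : B) • π ((((c (y*x))⁻¹ : Bˣ) : B) • (b • m)) :=
        (Fintype.sum_equiv (Equiv.mulLeft y)
          (fun x => (c (y*x) : B) • π ((((c (y*x))⁻¹ : Bˣ) : B) • (b • m)))
          (fun x => (c x : B) • π ((((c x)⁻¹ : Bˣ) : B) • (b • m)))
          (fun x => rfl)).symm
      rw [hpdef]
      simp only []
      rw [hre]
      simp only [hterm]
      rw [← Finset.smul_sum]
      set z := ∑ x : G, (c x : B) • π ((((c x)⁻¹ : Bˣ) : B) • m)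
      rw [← algebraMap_smul B ((Nat.card G : F)⁻¹) (b • z),
        ← algebraMap_smul B ((Nat.card G : F)⁻¹) z,
        smul_smul, smul_smul, Algebra.commutes]
    have hpB : ∀ (b : B) (m : B ⧸ T), p (b • m) = b • p m := by
      intro b m
      obtain ⟨d, hd, hdsum⟩ := D1 b
      have hmk : ∀ m' : B ⧸ T, (∑ x : G, d x) • m' = ∑ x : G, d x • m' := by
        intro m'; rw [Finset.sum_smul]
      rw [← hdsum, hmk]
      have hpsum := map_sum (AddMonoidHom.mk' p hpadd) (fun x => d x • m) Finset.univ
      rw [show (AddMonoidHom.mk' p hpadd) (∑ x : G, d x • m) = p (∑ x : G, d x • m) from rfl]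
        at hpsum
      rw [hpsum]
      have : ∀ x : G, (AddMonoidHom.mk' p hpadd) (d x • m) = d x • p m := fun x =>
        hpBhom x (d x) (hd x) m
      rw [Finset.sum_congr rfl fun x _ => this x]
      rw [← hmk]
    -- conclude
    intro k hk
    have hkL : T.mkQ k ∈ LB := ⟨k, hk, rfl⟩
    obtain ⟨k₀, hk₀, hk₀eq⟩ := hpmem (T.mkQ 1)
    have h2 : T.mkQ k = k • T.mkQ (1 : B) := by
      rw [← map_smul, smul_eq_mul, mul_one]
    have h3 : T.mkQ k = T.mkQ (k * k₀) := by
      calc T.mkQ k = p (T.mkQ k) := (hpid _ hkL).symm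
        _ = p (k • T.mkQ (1 : B)) := by rw [← h2]
        _ = k • p (T.mkQ (1 : B)) := hpB k _
        _ = k • T.mkQ k₀ := by rw [← hk₀eq]
        _ = T.mkQ (k * k₀) := by rw [← map_smul, smul_eq_mul]
    have h5 : k - k * k₀ ∈ T := (Submodule.Quotient.eq T).mp h3
    have h6 : k * (1 - k₀) ∈ T := by rwa [mul_sub, mul_one]
    obtain ⟨u, hu⟩ := CPJ.isUnit_one_sub hk₀
    have h7 := hTr _ h6 ((u⁻¹ : Bˣ) : B)
    rw [mul_assoc, ← hu, u.mul_inv, mul_one] at h7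
    exact h7
  have hKT : Ideal.jacobson (⊥ : Ideal B) = T := le_antisymm hJBT hTJB
  constructor
  · rw [hKT]
  · rw [hKT, hTSset]
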